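/- Let β ∈ (0,1)^n with ‖β‖₁ ≤ 1, w ∈ relint(Δⁿ), and let p be the relative entropy projection of w onto C(β). Suppose the coordinates are ordered so that w₁/β₁ ≤ w₂/β₂ ≤ … ≤ wₙ/βₙ. Then the set Ψ = {i : pᵢ = βᵢ} is a prefix: there exists k such that p = (β₁,…,β_k, λw_{k+1},…,λwₙ) with λ = (1−Σ_{i≤k}βᵢ)/(1−Σ_{i≤k}wᵢ). -/

import Mathlib

open Finset Real
open scoped Classical

private lemma sum_sub_two {n : ℕ} (F : Fin n → ℝ → ℝ) (u v : Fin n → ℝ) {i j : Fin n}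
    (hij : i ≠ j) (h : ∀ m, m ≠ i → m ≠ j → u m = v m) :
    ∑ m, F m (u m) - ∑ m, F m (v m)
      = (F i (u i) - F i (v i)) + (F j (u j) - F j (v j)) := by
  rw [← Finset.sum_sub_distrib,
    ← Finset.sum_pair (f := fun m => F m (u m) - F m (v m)) hij]
  refine (Finset.sum_subset (Finset.subset_univ _) fun m _ hm => ?_).symm
  simp only [Finset.mem_insert, Finset.mem_singleton, not_or] at hm
  rw [h m hm.1 hm.2, sub_self]

private lemma prefix_iff {n : ℕ} (S : Finset (Fin n))
    (hdc : ∀ i ∈ S, ∀ j, j ≤ i → j ∈ S) (i : Fin n) : i ∈ S ↔ (i : ℕ) < S.card := by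
  constructor
  · intro hi
    have h1 : Finset.Iic i ⊆ S := fun j hj => hdc i hi j (Finset.mem_Iic.mp hj)
    have h2 := Finset.card_le_card h1
    rw [Fin.card_Iic] at h2
    omega
  · intro hi
    by_contra hni
    have h1 : S ⊆ Finset.Iio i := fun j hj =>
      Finset.mem_Iio.mpr (lt_of_not_ge fun h => hni (hdc j hj i h))
    have h2 := Finset.card_le_card h1
    rw [Fin.card_Iio] at h2
    omega

/-- Claim 1: under the ratio ordering, the set of clamped
components of the relative entropy projection is a prefix. -/
theorem stmt_10 (n : ℕ) (β w p : Fin n → ℝ)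
    (hβ : ∀ i, β i ∈ Set.Ioo (0:ℝ) 1) (hβ1 : ∑ i, β i ≤ 1)
    (hw : ∀ i, 0 < w i) (hw1 : ∑ i, w i = 1)
    (hord : ∀ i j : Fin n, i ≤ j → w i / β i ≤ w j / β j)
    (hpC : (∀ i, β i ≤ p i) ∧ (∀ i, 0 ≤ p i) ∧ ∑ i, p i = 1)
    (hmin : ∀ u : Fin n → ℝ, (∀ i, β i ≤ u i) → (∀ i, 0 ≤ u i) → ∑ i, u i = 1 →
      ∑ i, p i * Real.log (p i / w i) ≤ ∑ i, u i * Real.log (u i / w i)) :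
    ∃ k ≤ n, ∀ i : Fin n,
      p i = if (i : ℕ) < k then β i
        else ((1 - ∑ j ∈ Finset.univ.filter (fun j : Fin n => (j : ℕ) < k), β j) /
              (1 - ∑ j ∈ Finset.univ.filter (fun j : Fin n => (j : ℕ) < k), w j)) * w i := by
  obtain ⟨hpβ, hp0, hp1⟩ := hpC
  have hppos : ∀ i, 0 < p i := fun i => lt_of_lt_of_le (hβ i).1 (hpβ i)
  set G : Fin n → ℝ → ℝ := fun m x => x * Real.log x - x * Real.log (w m) with hG
  have hGeq : ∀ (v : Fin n → ℝ), (∀ m, 0 < v m) →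
      ∑ m, v m * Real.log (v m / w m) = ∑ m, G m (v m) := by
    intro v hv
    refine Finset.sum_congr rfl fun m _ => ?_
    rw [Real.log_div (ne_of_gt (hv m)) (ne_of_gt (hw m))]
    simp only [hG]
    ring
  -- Key: if i is unclamped then its ratio p i / w i is minimal.
  have key : ∀ i j : Fin n, β i < p i → p i / w i ≤ p j / w j := by
    intro i j hib
    rcases eq_or_ne i j with rfl | hij
    · exact le_refl _
    have hdi : HasDerivAt (G i) (Real.log (p i) + 1 - Real.log (w i)) (p i) := by
      have := (Real.hasDerivAt_mul_log (ne_of_gt (hppos i))).sub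
        ((hasDerivAt_id (p i)).mul_const (Real.log (w i)))
      rw [one_mul] at this; exact this
    have hdj : HasDerivAt (G j) (Real.log (p j) + 1 - Real.log (w j)) (p j) := by
      have := (Real.hasDerivAt_mul_log (ne_of_gt (hppos j))).sub
        ((hasDerivAt_id (p j)).mul_const (Real.log (w j)))
      rw [one_mul] at this; exact this
    -- slope limits along t → 0⁺
    have hti : Filter.Tendsto (fun t : ℝ => slope (G i) (p i) (p i - t))
        (nhdsWithin 0 (Set.Ioi 0)) (nhds (Real.log (p i) + 1 - Real.log (w i))) := by
      refine (hasDerivAt_iff_tendsto_slope.mp hdi).comp ?_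
      rw [tendsto_nhdsWithin_iff]
      constructor
      · have h1 : Filter.Tendsto (fun t : ℝ => p i - t) (nhds 0) (nhds (p i - 0)) :=
          tendsto_const_nhds.sub Filter.tendsto_id
        simpa using h1.mono_left nhdsWithin_le_nhds
      · filter_upwards [self_mem_nhdsWithin] with t ht
        simp only [Set.mem_compl_iff, Set.mem_singleton_iff]
        rw [Set.mem_Ioi] at ht
        intro h
        have : t = 0 := by linarith [h]
        linarith
    have htj : Filter.Tendsto (fun t : ℝ => slope (G j) (p j) (p j + t))
        (nhdsWithin 0 (Set.Ioi 0)) (nhds (Real.log (p j) + 1 - Real.log (w j))) := by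
      refine (hasDerivAt_iff_tendsto_slope.mp hdj).comp ?_
      rw [tendsto_nhdsWithin_iff]
      constructor
      · have h1 : Filter.Tendsto (fun t : ℝ => p j + t) (nhds 0) (nhds (p j + 0)) :=
          tendsto_const_nhds.add Filter.tendsto_id
        simpa using h1.mono_left nhdsWithin_le_nhds
      · filter_upwards [self_mem_nhdsWithin] with t ht
        simp only [Set.mem_compl_iff, Set.mem_singleton_iff]
        rw [Set.mem_Ioi] at ht
        intro h
        have : t = 0 := by linarith [h]
        linarith
    -- the eventual inequality between slopes
    have hineq : ∀ᶠ t in nhdsWithin (0:ℝ) (Set.Ioi 0),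
        slope (G i) (p i) (p i - t) ≤ slope (G j) (p j) (p j + t) := by
      filter_upwards [Ioo_mem_nhdsGT_of_mem
        (Set.mem_Ico.mpr ⟨le_refl (0:ℝ), sub_pos.mpr hib⟩)] with t ht
      obtain ⟨ht0, htε⟩ := ht
      set u : Fin n → ℝ := fun m => if m = i then p i - t else if m = j then p j + t else p m
        with hu
      have hu_i : u i = p i - t := by simp [hu]
      have hu_j : u j = p j + t := by simp [hu, Ne.symm hij]
      have hu_other : ∀ m, m ≠ i → m ≠ j → u m = p m := by
        intro m h1 h2; simp [hu, h1, h2]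
      have huβ : ∀ m, β m ≤ u m := by
        intro m
        by_cases h1 : m = i
        · subst h1; rw [hu_i]; linarith
        by_cases h2 : m = j
        · subst h2; rw [hu_j]; have := hpβ m; linarith
        · rw [hu_other m h1 h2]; exact hpβ m
      have hupos : ∀ m, 0 < u m := fun m => lt_of_lt_of_le (hβ m).1 (huβ m)
      have hu0 : ∀ m, 0 ≤ u m := fun m => le_of_lt (hupos m)
      have hu1 : ∑ m, u m = 1 := by
        have h3 := sum_sub_two (fun _ x => x) u p hij hu_other
        rw [hu_i, hu_j] at h3
        have h4 : ∑ m, u m - ∑ m, p m = 0 := by rw [h3]; ring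
        linarith [hp1]
      have hm := hmin u huβ hu0 hu1
      rw [hGeq p hppos, hGeq u hupos] at hm
      have hdiff := sum_sub_two G u p hij hu_other
      rw [hu_i, hu_j] at hdiff
      have h0 : 0 ≤ (G i (p i - t) - G i (p i)) + (G j (p j + t) - G j (p j)) := by
        rw [← hdiff]; linarith
      have e1 : slope (G i) (p i) (p i - t) = (G i (p i) - G i (p i - t)) / t := by
        rw [slope_def_field, show p i - t - p i = -t from by ring, div_neg, ← neg_div,
          neg_sub]
      have e2 : slope (G j) (p j) (p j + t) = (G j (p j + t) - G j (p j)) / t := by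
        rw [slope_def_field, show p j + t - p j = t from by ring]
      rw [e1, e2, div_le_div_iff_of_pos_right ht0]
      linarith
    have hle := le_of_tendsto_of_tendsto hti htj hineq
    have hlog : Real.log (p i / w i) ≤ Real.log (p j / w j) := by
      rw [Real.log_div (ne_of_gt (hppos i)) (ne_of_gt (hw i)),
        Real.log_div (ne_of_gt (hppos j)) (ne_of_gt (hw j))]
      linarith
    exact (Real.log_le_log_iff (div_pos (hppos i) (hw i))
      (div_pos (hppos j) (hw j))).mp hlog
  -- The clamped set
  set Ψ : Finset (Fin n) := Finset.univ.filter (fun i => p i = β i) with hΨ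
  have hdc : ∀ i ∈ Ψ, ∀ j, j ≤ i → j ∈ Ψ := by
    intro i hi j hji
    simp only [hΨ, Finset.mem_filter, Finset.mem_univ, true_and] at hi ⊢
    by_contra hne
    have hjb : β j < p j := lt_of_le_of_ne (hpβ j) (Ne.symm hne)
    have h1 := key j i hjb
    rw [hi] at h1
    have h2 := hord j i hji
    have hβj := (hβ j).1; have hβi := (hβ i).1; have hwj := hw j; have hwi := hw i
    have h3 : β i / w i ≤ β j / w j := by
      rw [div_le_div_iff₀ hwi hwj]
      rw [div_le_div_iff₀ hβj hβi] at h2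
      nlinarith
    have h4 : p j / w j ≤ β j / w j := le_trans h1 h3
    have h5 : p j ≤ β j := by
      rwa [div_le_div_iff_of_pos_right hwj] at h4
    linarith
  refine ⟨Ψ.card, le_trans (Finset.card_le_card (Finset.subset_univ _)) (by simp), ?_⟩
  have hmem : ∀ i : Fin n, i ∈ Ψ ↔ (i : ℕ) < Ψ.card := prefix_iff Ψ hdc
  have hfil : Finset.univ.filter (fun j : Fin n => (j : ℕ) < Ψ.card) = Ψ := by
    ext m
    simp only [Finset.mem_filter, Finset.mem_univ, true_and]
    exact (hmem m).symm
  intro i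
  rw [hfil]
  by_cases hic : (i : ℕ) < Ψ.card
  · rw [if_pos hic]
    have := (hmem i).mpr hic
    simp only [hΨ, Finset.mem_filter, Finset.mem_univ, true_and] at this
    exact this
  · rw [if_neg hic]
    have hiΨ : i ∉ Ψ := fun h => hic ((hmem i).mp h)
    have hib : β i < p i := by
      refine lt_of_le_of_ne (hpβ i) fun h => hiΨ ?_
      simp [hΨ, h.symm]
    -- sums
    have hW : ∑ m ∈ Ψᶜ, w m = 1 - ∑ m ∈ Ψ, w m := by
      have := Finset.sum_add_sum_compl Ψ w
      linarith [hw1]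
    have hcompl_pos : 0 < ∑ m ∈ Ψᶜ, w m :=
      Finset.sum_pos (fun m _ => hw m) ⟨i, Finset.mem_compl.mpr hiΨ⟩
    have h1W : (0:ℝ) < 1 - ∑ m ∈ Ψ, w m := by rw [← hW]; exact hcompl_pos
    have h2 : ∑ m ∈ Ψ, p m = ∑ m ∈ Ψ, β m := by
      refine Finset.sum_congr rfl fun m hm => ?_
      simp only [hΨ, Finset.mem_filter, Finset.mem_univ, true_and] at hm
      exact hm
    have h3 : ∑ m ∈ Ψᶜ, p m = (p i / w i) * ∑ m ∈ Ψᶜ, w m := by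
      rw [Finset.mul_sum]
      refine Finset.sum_congr rfl fun m hm => ?_
      have hmΨ : m ∉ Ψ := Finset.mem_compl.mp hm
      have hmb : β m < p m := by
        refine lt_of_le_of_ne (hpβ m) fun h => hmΨ ?_
        simp [hΨ, h.symm]
      have hr : p m / w m = p i / w i := le_antisymm (key m i hmb) (key i m hib)
      rw [← hr, div_mul_cancel₀ _ (ne_of_gt (hw m))]
    have h4 := Finset.sum_add_sum_compl Ψ p
    rw [h2, h3, hW] at h4
    rw [hp1] at h4
    have hsum' : (1 - ∑ m ∈ Ψ, β m) = p i / w i * (1 - ∑ m ∈ Ψ, w m) := by linarith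
    rw [hsum', mul_div_assoc, div_self (ne_of_gt h1W), mul_one,
      div_mul_cancel₀ _ (ne_of_gt (hw i))]
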